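/- Let E be a finite linearly ordered set and S_1 ⊋ S_2 ⊋ S_3 nonempty subsets with S_1 ◁ S_2 and S_2 ◁ S_3 (where S ◁ T means S is an initial segment of S ∪ T and (S \ {max S}) ∪ T ⊊ S ∪ T). Then S_1 ◁ S_3. -/
import Mathlib


/-- `S ◁ T`: `S` is nonempty, `S` is an initial segment of `S ∪ T` (every element of
`S ∪ T` that is `≤ max S` lies in `S`), and `(S \ {max S}) ∪ T ⊊ S ∪ T`. -/
def Tri {E : Type*} [LinearOrder E] (S T : Finset E) : Prop :=
  S.Nonempty ∧ ∀ m ∈ S, (∀ y ∈ S, y ≤ m) →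
    (∀ x ∈ S ∪ T, x ≤ m → x ∈ S) ∧ S.erase m ∪ T ⊂ S ∪ T

/-- If `S₁ ⊋ S₂ ⊋ S₃` are nonempty with `S₁ ◁ S₂` and `S₂ ◁ S₃`, then `S₁ ◁ S₃`. -/
theorem stmt8 {E : Type*} [Fintype E] [LinearOrder E] (S₁ S₂ S₃ : Finset E)
    (h₃ : S₃.Nonempty) (h21 : S₂ ⊂ S₁) (h32 : S₃ ⊂ S₂)
    (h12 : Tri S₁ S₂) (h23 : Tri S₂ S₃) : Tri S₁ S₃ := by
  refine ⟨h12.1, fun m hm hmax => ?_⟩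
  have h2 := (h12.2 m hm hmax).2
  have hm2 : m ∉ S₂ := by
    intro hmem
    apply h2.not_subset
    intro x hx
    rcases Finset.mem_union.mp hx with h | h
    · by_cases hxm : x = m
      · exact Finset.mem_union_right _ (hxm ▸ hmem)
      · exact Finset.mem_union_left _ (Finset.mem_erase.mpr ⟨hxm, h⟩)
    · exact Finset.mem_union_right _ h
  have hm3 : m ∉ S₃ := fun h => hm2 (h32.subset h)
  constructor
  · intro x hx _
    rcases Finset.mem_union.mp hx with h | h
    · exact h
    · exact h21.subset (h32.subset h)
  · constructor
    · intro x hx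
      rcases Finset.mem_union.mp hx with h | h
      · exact Finset.mem_union_left _ (Finset.mem_of_mem_erase h)
      · exact Finset.mem_union_right _ h
    · intro hsub
      have : m ∈ S₁.erase m ∪ S₃ := hsub (Finset.mem_union_left _ hm)
      rcases Finset.mem_union.mp this with h | h
      · exact (Finset.mem_erase.mp h).1 rfl
      · exact hm3 h
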